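/- Let k ≥ 1, let X ⊂ ℝ^{n_x} be a bounded, closed, convex set, and let f, g : ℝ^{n_x} → ℝ both have partial derivatives up to order k bounded by 1 on X. Let δ ∈ (0,1) and let x, x̂ ∈ X with ‖x − x̂‖ ≤ δ (Euclidean norm). If |D^𝐧 f(x̂) − D^𝐧 g(x̂)| ≤ δ^{k − |𝐧|} for every multi-index 𝐧 with |𝐧| ≤ k, then |f(x) − g(x)| ≤ ( e^{n_x} + 2 n_x^{k} / k! ) · δ^{k}. -/

import Mathlib

open Set

/-- Bound on a continuous multilinear map applied to copies of `u`, given bounds on its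
values on coordinate basis vectors. -/
lemma multilin_bound {n d : ℕ} (M : ContinuousMultilinearMap ℝ (fun _ : Fin d => (Fin n → ℝ)) ℝ)
    (u : Fin n → ℝ) {C : ℝ}
    (hC : ∀ v : Fin d → Fin n, |M (fun j => Pi.single (v j) 1)| ≤ C) :
    |M (fun _ => u)| ≤ (∑ i, |u i|) ^ d * C := by
  have hu : (fun _ : Fin d => u)
      = fun _ : Fin d => ∑ i : Fin n, u i • (Pi.single i 1 : Fin n → ℝ) := by
    funext _
    funext j
    simp [Finset.sum_apply, Pi.single_apply]
  rw [hu, M.map_sum]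
  have hterm : ∀ r : Fin d → Fin n,
      M (fun j => u (r j) • (Pi.single (r j) 1 : Fin n → ℝ))
        = (∏ j, u (r j)) • M (fun j => Pi.single (r j) 1) := by
    intro r
    exact M.map_smul_univ (fun j => u (r j)) (fun j => Pi.single (r j) 1)
  calc |∑ r : Fin d → Fin n, M (fun j => u (r j) • (Pi.single (r j) 1 : Fin n → ℝ))|
      ≤ ∑ r : Fin d → Fin n,
          |M (fun j => u (r j) • (Pi.single (r j) 1 : Fin n → ℝ))| :=
        Finset.abs_sum_le_sum_abs _ _
    _ ≤ ∑ r : Fin d → Fin n, (∏ j, |u (r j)|) * C := by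
        refine Finset.sum_le_sum fun r _ => ?_
        rw [hterm r, smul_eq_mul, abs_mul, ← Finset.abs_prod]
        have h1 : (0:ℝ) ≤ ∏ j, |u (r j)| := Finset.prod_nonneg fun _ _ => abs_nonneg _
        rw [Finset.abs_prod]
        exact mul_le_mul_of_nonneg_left (hC r) h1
    _ = (∑ i, |u i|) ^ d * C := by
        rw [← Finset.sum_mul]
        congr 1
        rw [← Fin.prod_const d (∑ i : Fin n, |u i|), Finset.prod_univ_sum]
        rw [← Fintype.piFinset_univ]

/-- `fderiv` commutes with translation on the domain (unconditionally). -/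
lemma fderiv_comp_const_add' {E F : Type*} [NormedAddCommGroup E] [NormedSpace ℝ E]
    [NormedAddCommGroup F] [NormedSpace ℝ F] (G : E → F) (c y : E) :
    fderiv ℝ (fun z => G (c + z)) y = fderiv ℝ G (c + y) := by
  by_cases hG : DifferentiableAt ℝ G (c + y)
  · have h1 : HasFDerivAt (fun z : E => c + z) (ContinuousLinearMap.id ℝ E) y :=
      (hasFDerivAt_id y).const_add c
    have h2 := (hG.hasFDerivAt.comp y h1).fderiv
    simpa [Function.comp_def] using h2
  · have hG' : ¬ DifferentiableAt ℝ (fun z => G (c + z)) y := by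
      intro h
      have h3 : DifferentiableAt ℝ (fun z => G (c + z)) ((c + y) - c) := by
        simpa [add_sub_cancel_left] using h
      have h4 : DifferentiableAt ℝ ((fun z => G (c + z)) ∘ (fun w : E => w - c)) (c + y) :=
        h3.comp (c + y) (differentiableAt_id.sub_const c)
      apply hG
      have : ((fun z => G (c + z)) ∘ (fun w : E => w - c)) = G := by
        funext w
        simp [Function.comp]
      rwa [this] at h4
    rw [fderiv_zero_of_not_differentiableAt hG, fderiv_zero_of_not_differentiableAt hG']

/-- `iteratedFDeriv` commutes with translation on the domain (unconditionally). -/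
lemma iteratedFDeriv_comp_const_add {E F : Type*} [NormedAddCommGroup E] [NormedSpace ℝ E]
    [NormedAddCommGroup F] [NormedSpace ℝ F] (f : E → F) (c : E) :
    ∀ (n : ℕ) (y : E), iteratedFDeriv ℝ n (fun z => f (c + z)) y = iteratedFDeriv ℝ n f (c + y) := by
  intro n
  induction n with
  | zero =>
    intro y
    ext m
    simp
  | succ n IH =>
    intro y
    rw [iteratedFDeriv_succ_eq_comp_left, iteratedFDeriv_succ_eq_comp_left]
    simp only [Function.comp_apply]
    congr 1
    have h1 : (iteratedFDeriv ℝ n fun z => f (c + z))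
        = fun y => iteratedFDeriv ℝ n f (c + y) := funext IH
    rw [h1]
    exact fderiv_comp_const_add' (iteratedFDeriv ℝ n f) c y

/-- On `Icc 0 1` inside an open set where `φ` is `C^k`, `iteratedDerivWithin` agrees with the
global `iteratedDeriv`. -/
lemma iteratedDerivWithin_Icc_eq {φ : ℝ → ℝ} {T : Set ℝ} (hT : IsOpen T)
    {k : ℕ} (hφ : ContDiffOn ℝ k φ T) (hsub : Icc (0:ℝ) 1 ⊆ T) {d : ℕ} (hd : d ≤ k)
    {t : ℝ} (ht : t ∈ Icc (0:ℝ) 1) :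
    iteratedDerivWithin d φ (Icc 0 1) t = iteratedDeriv d φ t := by
  have h1 := hφ.ftaylorSeriesWithin hT.uniqueDiffOn
  have h2 := (h1.mono hsub).eq_iteratedFDerivWithin_of_uniqueDiffOn
    (by exact_mod_cast hd) (uniqueDiffOn_Icc one_pos) ht
  have h3 : ftaylorSeriesWithin ℝ φ T t d = iteratedFDeriv ℝ d φ t := by
    have := iteratedFDerivWithin_of_isOpen (f := φ) (𝕜 := ℝ) d hT (hsub ht)
    simpa [ftaylorSeriesWithin] using this
  rw [iteratedDerivWithin_eq_iteratedFDerivWithin, iteratedDeriv_eq_iteratedFDeriv, ← h2, h3]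

/-- Derivatives of a function along a line, expressed via `iteratedFDeriv`. -/
lemma line_deriv {nx k : ℕ} {U : Set (Fin nx → ℝ)} (hU : IsOpen U)
    (F : (Fin nx → ℝ) → ℝ) (hF : ContDiffOn ℝ k F U) (xh u : Fin nx → ℝ)
    (hmem : ∀ t ∈ Icc (0:ℝ) 1, xh + t • u ∈ U) :
    ContDiffOn ℝ k (fun t : ℝ => F (xh + t • u)) (Icc 0 1) ∧
    ∀ d ≤ k, ∀ t ∈ Icc (0:ℝ) 1,
      iteratedDerivWithin d (fun t : ℝ => F (xh + t • u)) (Icc 0 1) t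
        = iteratedFDeriv ℝ d F (xh + t • u) (fun _ => u) := by
  set F₂ : (Fin nx → ℝ) → ℝ := F ∘ (fun y => xh + y) with hF₂def
  set U₂ : Set (Fin nx → ℝ) := (fun y => xh + y) ⁻¹' U with hU₂def
  have hU₂ : IsOpen U₂ := hU.preimage (continuous_const.add continuous_id)
  have hF₂ : ContDiffOn ℝ k F₂ U₂ :=
    hF.comp ((contDiff_const.add contDiff_id).contDiffOn) (fun y hy => hy)
  set L : ℝ →L[ℝ] (Fin nx → ℝ) := ContinuousLinearMap.toSpanSingleton ℝ u with hLdef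
  have hLapp : ∀ t : ℝ, L t = t • u := fun t => ContinuousLinearMap.toSpanSingleton_apply ℝ u t
  set T : Set ℝ := L ⁻¹' U₂ with hTdef
  have hT : IsOpen T := hU₂.preimage L.continuous
  have hφeq : (fun t : ℝ => F (xh + t • u)) = F₂ ∘ L := by
    funext t
    simp [hF₂def, Function.comp, hLapp t]
  have hsubT : Icc (0:ℝ) 1 ⊆ T := by
    intro t ht
    have : xh + L t ∈ U := by rw [hLapp t]; exact hmem t ht
    exact this
  have hφT : ContDiffOn ℝ k (fun t : ℝ => F (xh + t • u)) T := by
    rw [hφeq]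
    exact hF₂.comp_continuousLinearMap L
  have hmemT : ∀ t ∈ Icc (0:ℝ) 1, L t ∈ U₂ := fun t ht => hsubT ht
  refine ⟨hφT.mono hsubT, fun d hd t ht => ?_⟩
  have e0 : iteratedDerivWithin d (fun t : ℝ => F (xh + t • u)) (Icc 0 1) t
      = iteratedDeriv d (fun t : ℝ => F (xh + t • u)) t :=
    iteratedDerivWithin_Icc_eq hT hφT hsubT hd ht
  have e1 := L.iteratedFDerivWithin_comp_right hF₂ hU₂.uniqueDiffOn hT.uniqueDiffOn
    (hmemT t ht) (by exact_mod_cast hd : (d : WithTop ℕ∞) ≤ (k : WithTop ℕ∞))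
  have e2 : iteratedFDeriv ℝ d (fun t : ℝ => F (xh + t • u)) t
      = iteratedFDerivWithin ℝ d (F₂ ∘ L) T t := by
    rw [hφeq, iteratedFDerivWithin_of_isOpen d hT (hsubT ht)]
  have e3 : iteratedFDerivWithin ℝ d F₂ U₂ (L t) = iteratedFDeriv ℝ d F₂ (L t) :=
    iteratedFDerivWithin_of_isOpen d hU₂ (hmemT t ht)
  have e4 : iteratedFDeriv ℝ d F₂ (L t) = iteratedFDeriv ℝ d F (xh + t • u) := by
    have := iteratedFDeriv_comp_const_add F xh d (L t)
    rw [hLapp t] at this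
    exact this
  rw [e0, iteratedDeriv_eq_iteratedFDeriv, e2, e1, e3, e4]
  rw [ContinuousMultilinearMap.compContinuousLinearMap_apply]
  congr 1
  funext j
  rw [hLapp 1, one_smul]

/-- Taylor-comparison step: two functions that are C^k near a bounded closed
convex set `X`, with partial derivatives up to order `k` bounded by 1 on `X`, whose derivative
data at a point `x̂` within Euclidean distance `δ` of `x` agree to resolution `δ^{k−|𝐧|}`,
differ at `x` by at most `(e^{n_x} + 2 n_x^k / k!) δ^k`. -/
theorem taylor_comparison (nx k : ℕ) (hk : 1 ≤ k)
    (X : Set (Fin nx → ℝ)) (hXb : Bornology.IsBounded X) (hXc : IsClosed X)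
    (hXconv : Convex ℝ X)
    (f g : (Fin nx → ℝ) → ℝ)
    (hf : ∃ U, IsOpen U ∧ X ⊆ U ∧ ContDiffOn ℝ k f U)
    (hg : ∃ U, IsOpen U ∧ X ⊆ U ∧ ContDiffOn ℝ k g U)
    (hfb : ∀ y ∈ X, ∀ d ≤ k, ∀ v : Fin d → Fin nx,
      |iteratedFDeriv ℝ d f y (fun j => Pi.single (v j) 1)| ≤ 1)
    (hgb : ∀ y ∈ X, ∀ d ≤ k, ∀ v : Fin d → Fin nx,
      |iteratedFDeriv ℝ d g y (fun j => Pi.single (v j) 1)| ≤ 1)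
    (δ : ℝ) (hδ : δ ∈ Set.Ioo (0 : ℝ) 1)
    (x xh : Fin nx → ℝ) (hx : x ∈ X) (hxh : xh ∈ X)
    (hclose : Real.sqrt (∑ i, (x i - xh i) ^ 2) ≤ δ)
    (hagree : ∀ d ≤ k, ∀ v : Fin d → Fin nx,
      |iteratedFDeriv ℝ d f xh (fun j => Pi.single (v j) 1) -
        iteratedFDeriv ℝ d g xh (fun j => Pi.single (v j) 1)| ≤ δ ^ (k - d)) :
    |f x - g x| ≤ (Real.exp nx + 2 * (nx : ℝ) ^ k / k.factorial) * δ ^ k := by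
  obtain ⟨Uf, hUfo, hXUf, hfC⟩ := hf
  obtain ⟨Ug, hUgo, hXUg, hgC⟩ := hg
  set U : Set (Fin nx → ℝ) := Uf ∩ Ug with hUdef
  have hUo : IsOpen U := hUfo.inter hUgo
  have hXU : X ⊆ U := subset_inter hXUf hXUg
  have hfC' : ContDiffOn ℝ k f U := hfC.mono inter_subset_left
  have hgC' : ContDiffOn ℝ k g U := hgC.mono inter_subset_right
  set u : Fin nx → ℝ := x - xh with hudef
  have hδ0 : (0:ℝ) < δ := hδ.1
  -- bound each coordinate of u
  have hsumsq : ∑ i, (x i - xh i) ^ 2 ≤ δ ^ 2 := by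
    have h0 : (0:ℝ) ≤ ∑ i, (x i - xh i) ^ 2 :=
      Finset.sum_nonneg fun i _ => sq_nonneg _
    have := Real.sq_sqrt h0
    nlinarith [Real.sqrt_nonneg (∑ i, (x i - xh i) ^ 2)]
  have hui : ∀ i, |u i| ≤ δ := by
    intro i
    have h1 : (u i) ^ 2 ≤ δ ^ 2 := by
      refine le_trans ?_ hsumsq
      have : (x i - xh i) ^ 2 = (u i) ^ 2 := by simp [hudef]
      rw [← this]
      exact Finset.single_le_sum (f := fun j => (x j - xh j) ^ 2) (fun j _ => sq_nonneg _) (Finset.mem_univ i)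
    calc |u i| = Real.sqrt ((u i) ^ 2) := (Real.sqrt_sq_eq_abs _).symm
      _ ≤ Real.sqrt (δ ^ 2) := Real.sqrt_le_sqrt h1
      _ = δ := Real.sqrt_sq hδ0.le
  set S : ℝ := ∑ i, |u i| with hSdef
  have hS0 : 0 ≤ S := Finset.sum_nonneg fun i _ => abs_nonneg _
  have hS : S ≤ (nx : ℝ) * δ := by
    calc S ≤ ∑ _i : Fin nx, δ := Finset.sum_le_sum fun i _ => hui i
      _ = (nx : ℝ) * δ := by
        rw [Finset.sum_const, Finset.card_univ, Fintype.card_fin, nsmul_eq_mul]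
  -- segment membership
  have hseg : ∀ t ∈ Icc (0:ℝ) 1, xh + t • u ∈ X := by
    intro t ht
    have h1 := hXconv hxh hx (by linarith [ht.2] : (0:ℝ) ≤ 1 - t) ht.1 (by ring)
    have h2 : (1 - t) • xh + t • x = xh + t • u := by
      funext i
      simp [hudef, Pi.smul_apply, smul_eq_mul]
      ring
    rwa [h2] at h1
  have hsegU : ∀ t ∈ Icc (0:ℝ) 1, xh + t • u ∈ U := fun t ht => hXU (hseg t ht)
  -- line restrictions
  obtain ⟨hφfI, hφfD⟩ := line_deriv hUo f hfC' xh u hsegU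
  obtain ⟨hφgI, hφgD⟩ := line_deriv hUo g hgC' xh u hsegU
  set φf : ℝ → ℝ := fun t : ℝ => f (xh + t • u) with hφfdef
  set φg : ℝ → ℝ := fun t : ℝ => g (xh + t • u) with hφgdef
  obtain ⟨n, rfl⟩ : ∃ n, k = n + 1 := ⟨k - 1, (Nat.succ_pred_eq_of_pos hk).symm⟩
  -- Taylor with Lagrange remainder for f and g
  have hφfI' : ContDiffOn ℝ n φf (Icc 0 1) := hφfI.of_le (by exact_mod_cast Nat.le_succ n)
  have hφgI' : ContDiffOn ℝ n φg (Icc 0 1) := hφgI.of_le (by exact_mod_cast Nat.le_succ n)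
  have hφf' : DifferentiableOn ℝ (iteratedDerivWithin n φf (Icc 0 1)) (Ioo 0 1) :=
    (hφfI.differentiableOn_iteratedDerivWithin (by exact_mod_cast n.lt_succ_self)
      (uniqueDiffOn_Icc one_pos)).mono Ioo_subset_Icc_self
  have hφg' : DifferentiableOn ℝ (iteratedDerivWithin n φg (Icc 0 1)) (Ioo 0 1) :=
    (hφgI.differentiableOn_iteratedDerivWithin (by exact_mod_cast n.lt_succ_self)
      (uniqueDiffOn_Icc one_pos)).mono Ioo_subset_Icc_self
  obtain ⟨tf, htf, hTf⟩ := taylor_mean_remainder_lagrange (f := φf) (n := n) (x₀ := 0) (x := 1)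
    (by norm_num : (0:ℝ) ≠ 1) (by rwa [uIcc_of_le zero_le_one])
    (by rwa [uIcc_of_le zero_le_one, uIoo_of_le zero_le_one])
  rw [uIcc_of_le zero_le_one] at hTf
  rw [uIoo_of_le zero_le_one] at htf
  obtain ⟨tg, htg, hTg⟩ := taylor_mean_remainder_lagrange (f := φg) (n := n) (x₀ := 0) (x := 1)
    (by norm_num : (0:ℝ) ≠ 1) (by rwa [uIcc_of_le zero_le_one])
    (by rwa [uIcc_of_le zero_le_one, uIoo_of_le zero_le_one])
  rw [uIcc_of_le zero_le_one] at hTg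
  rw [uIoo_of_le zero_le_one] at htg
  -- values at endpoints
  have hφf1 : φf 1 = f x := by simp [hφfdef, hudef]
  have hφg1 : φg 1 = g x := by simp [hφgdef, hudef]
  -- remainder bounds
  have hrem : ∀ (F : (Fin nx → ℝ) → ℝ)
      (_ : ∀ y ∈ X, ∀ d ≤ n + 1, ∀ v : Fin d → Fin nx,
        |iteratedFDeriv ℝ d F y (fun j => Pi.single (v j) 1)| ≤ 1)
      (hD : ∀ d ≤ n + 1, ∀ t ∈ Icc (0:ℝ) 1,
        iteratedDerivWithin d (fun t : ℝ => F (xh + t • u)) (Icc 0 1) t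
          = iteratedFDeriv ℝ d F (xh + t • u) (fun _ => u))
      (t : ℝ) (ht : t ∈ Ioo (0:ℝ) 1),
      |iteratedDerivWithin (n + 1) (fun t : ℝ => F (xh + t • u)) (Icc 0 1) t| ≤ S ^ (n + 1) := by
    intro F hFb hD t ht
    have ht' : t ∈ Icc (0:ℝ) 1 := Ioo_subset_Icc_self ht
    rw [hD (n + 1) le_rfl t ht']
    have := multilin_bound (iteratedFDeriv ℝ (n + 1) F (xh + t • u)) u
      (C := 1) (fun v => hFb (xh + t • u) (hseg t ht') (n + 1) le_rfl v)
    simpa using this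
  have hremf := hrem f hfb hφfD tf htf
  have hremg := hrem g hgb hφgD tg htg
  -- Taylor polynomial difference bound
  have hcoeff : ∀ d ≤ n + 1,
      |iteratedDerivWithin d φf (Icc 0 1) 0 - iteratedDerivWithin d φg (Icc 0 1) 0|
        ≤ S ^ d * δ ^ (n + 1 - d) := by
    intro d hd
    have h0 : (0:ℝ) ∈ Icc (0:ℝ) 1 := by norm_num
    have hx0 : xh + (0:ℝ) • u = xh := by simp
    have e1 := hφfD d hd 0 h0
    have e2 := hφgD d hd 0 h0
    rw [hx0] at e1 e2
    rw [e1, e2]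
    set M : ContinuousMultilinearMap ℝ (fun _ : Fin d => (Fin nx → ℝ)) ℝ :=
      iteratedFDeriv ℝ d f xh - iteratedFDeriv ℝ d g xh with hMdef
    have hM1 : iteratedFDeriv ℝ d f xh (fun _ => u) - iteratedFDeriv ℝ d g xh (fun _ => u)
        = M (fun _ => u) := by simp [hMdef]
    rw [hM1]
    refine multilin_bound M u (fun v => ?_)
    have := hagree d hd v
    simpa [hMdef] using this
  -- bound the sum of coefficient differences
  have hpowS : ∀ d ≤ n + 1, S ^ d * δ ^ (n + 1 - d) ≤ (nx : ℝ) ^ d * δ ^ (n + 1) := by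
    intro d hd
    have h1 : S ^ d ≤ ((nx : ℝ) * δ) ^ d := pow_le_pow_left₀ hS0 hS d
    have h2 : ((nx : ℝ) * δ) ^ d = (nx : ℝ) ^ d * δ ^ d := mul_pow _ _ _
    have h3 : δ ^ d * δ ^ (n + 1 - d) = δ ^ (n + 1) := by
      rw [← pow_add]
      congr 1
      omega
    calc S ^ d * δ ^ (n + 1 - d) ≤ ((nx : ℝ) * δ) ^ d * δ ^ (n + 1 - d) := by
          exact mul_le_mul_of_nonneg_right h1 (pow_nonneg hδ0.le _)
      _ = (nx : ℝ) ^ d * (δ ^ d * δ ^ (n + 1 - d)) := by rw [h2]; ring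
      _ = (nx : ℝ) ^ d * δ ^ (n + 1) := by rw [h3]
  -- assemble the Taylor polynomial difference
  have hTdiff : |taylorWithinEval φf n (Icc 0 1) 0 1 - taylorWithinEval φg n (Icc 0 1) 0 1|
      ≤ Real.exp nx * δ ^ (n + 1) := by
    rw [taylor_within_apply, taylor_within_apply, ← Finset.sum_sub_distrib]
    calc |∑ d ∈ Finset.range (n + 1),
          (((d.factorial : ℝ)⁻¹ * (1 - 0) ^ d) • iteratedDerivWithin d φf (Icc 0 1) 0 -
           ((d.factorial : ℝ)⁻¹ * (1 - 0) ^ d) • iteratedDerivWithin d φg (Icc 0 1) 0)|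
        ≤ ∑ d ∈ Finset.range (n + 1),
          |((d.factorial : ℝ)⁻¹ * (1 - 0) ^ d) • iteratedDerivWithin d φf (Icc 0 1) 0 -
           ((d.factorial : ℝ)⁻¹ * (1 - 0) ^ d) • iteratedDerivWithin d φg (Icc 0 1) 0| :=
          Finset.abs_sum_le_sum_abs _ _
      _ ≤ ∑ d ∈ Finset.range (n + 1), (d.factorial : ℝ)⁻¹ * ((nx : ℝ) ^ d * δ ^ (n + 1)) := by
          refine Finset.sum_le_sum fun d hd => ?_
          have hd' : d ≤ n + 1 := by
            have := Finset.mem_range.mp hd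
            omega
          rw [← smul_sub, smul_eq_mul, abs_mul]
          have hfac : |(d.factorial : ℝ)⁻¹ * (1 - 0) ^ d| = (d.factorial : ℝ)⁻¹ := by
            rw [abs_of_nonneg]
            · norm_num
            · positivity
          rw [hfac]
          refine mul_le_mul_of_nonneg_left ?_ (by positivity)
          exact le_trans (hcoeff d hd') (hpowS d hd')
      _ = (∑ d ∈ Finset.range (n + 1), (nx : ℝ) ^ d / d.factorial) * δ ^ (n + 1) := by
          rw [Finset.sum_mul]
          congr 1
          funext d
          ring
      _ ≤ Real.exp nx * δ ^ (n + 1) := by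
          refine mul_le_mul_of_nonneg_right ?_ (pow_nonneg hδ0.le _)
          exact Real.sum_le_exp_of_nonneg (Nat.cast_nonneg nx) (n + 1)
  -- final assembly
  have hSk : S ^ (n + 1) ≤ (nx : ℝ) ^ (n + 1) * δ ^ (n + 1) := by
    calc S ^ (n + 1) ≤ ((nx : ℝ) * δ) ^ (n + 1) := pow_le_pow_left₀ hS0 hS _
      _ = (nx : ℝ) ^ (n + 1) * δ ^ (n + 1) := mul_pow _ _ _
  have hbound : ∀ (φ : ℝ → ℝ) (t : ℝ)
      (_ : |iteratedDerivWithin (n + 1) φ (Icc 0 1) t| ≤ S ^ (n + 1)),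
      |iteratedDerivWithin (n + 1) φ (Icc 0 1) t * (1 - 0) ^ (n + 1) / ((n + 1).factorial : ℝ)|
        ≤ (nx : ℝ) ^ (n + 1) * δ ^ (n + 1) / ((n + 1).factorial : ℝ) := by
    intro φ t h
    have h2 := h.trans hSk
    have h3 : |iteratedDerivWithin (n + 1) φ (Icc 0 1) t * (1 - 0) ^ (n + 1)
        / ((n + 1).factorial : ℝ)|
        = |iteratedDerivWithin (n + 1) φ (Icc 0 1) t| / ((n + 1).factorial : ℝ) := by
      rw [abs_div, abs_mul]
      norm_num
    rw [h3]
    gcongr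
  have hRf := hTf ▸ hbound φf tf hremf
  have hRg := hTg ▸ hbound φg tg hremg
  set Tf := taylorWithinEval φf n (Icc 0 1) 0 1 with hTfdef
  set Tg := taylorWithinEval φg n (Icc 0 1) 0 1 with hTgdef
  have hkey : f x - g x = (φf 1 - Tf) - (φg 1 - Tg) + (Tf - Tg) := by
    rw [← hφf1, ← hφg1]; ring
  have htri : |f x - g x| ≤ |φf 1 - Tf| + |φg 1 - Tg| + |Tf - Tg| := by
    rw [hkey]
    calc |((φf 1 - Tf) - (φg 1 - Tg)) + (Tf - Tg)|
        ≤ |(φf 1 - Tf) - (φg 1 - Tg)| + |Tf - Tg| := abs_add_le _ _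
      _ ≤ |φf 1 - Tf| + |φg 1 - Tg| + |Tf - Tg| := by
          have := abs_sub (φf 1 - Tf) (φg 1 - Tg)
          linarith
  have hRf' : |φf 1 - Tf| ≤ (nx : ℝ) ^ (n + 1) * δ ^ (n + 1) / ((n + 1).factorial : ℝ) := by
    rw [hTfdef, hTf]
    exact hbound φf tf hremf
  have hRg' : |φg 1 - Tg| ≤ (nx : ℝ) ^ (n + 1) * δ ^ (n + 1) / ((n + 1).factorial : ℝ) := by
    rw [hTgdef, hTg]
    exact hbound φg tg hremg
  have hfinal : (Real.exp nx + 2 * (nx : ℝ) ^ (n + 1) / ((n + 1).factorial : ℝ)) * δ ^ (n + 1)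
      = (nx : ℝ) ^ (n + 1) * δ ^ (n + 1) / ((n + 1).factorial : ℝ)
        + (nx : ℝ) ^ (n + 1) * δ ^ (n + 1) / ((n + 1).factorial : ℝ)
        + Real.exp nx * δ ^ (n + 1) := by ring
  rw [hfinal]
  linarith [htri, hRf', hRg', hTdiff]
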